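/- Let Cov_Fib[ℓ] denote the length of the shortest cover of the length-ℓ prefix of the infinite Fibonacci word Fib. For every k ≥ 4 and every ℓ with F_k < ℓ < F_{k+1} such that ℓ ≠ F_{k+1} − 1 and ℓ ≠ 2F_{k−1} − 1, it holds that Cov_Fib[ℓ] = Cov_Fib[ℓ − F_{k−1}]. -/

import Mathlib

section Defs

variable {α : Type*}

/-- `C` occurs in `T` at starting position `i`. -/
def OccursAt (C T : List α) (i : ℕ) : Prop :=
  i + C.length ≤ T.length ∧ (T.drop i).take C.length = C

/-- `C` is a cover of `T`: `C` occurs in `T` and every position of `T`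
lies within an occurrence of `C`. -/
def IsCover (C T : List α) : Prop :=
  (∃ i, OccursAt C T i) ∧
    ∀ q, q < T.length → ∃ i, OccursAt C T i ∧ i ≤ q ∧ q < i + C.length

/-- A border of `T` is both a prefix and a suffix of `T`. -/
def IsBorder (B T : List α) : Prop := B <+: T ∧ B <:+ T

/-- `p` is a period of `U`: `U[i] = U[i+p]` for all `0 ≤ i < |U| - p`. -/
def IsPeriod (p : ℕ) (U : List α) : Prop :=
  0 < p ∧ ∀ i, i + p < U.length → U[i]? = U[i + p]?

/-- `U` is aperiodic: its smallest period `p` satisfies `2p > |U|`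
(equivalently, every period `p` of `U` satisfies `2p > |U|`). -/
def StrAperiodic (U : List α) : Prop := ∀ p, IsPeriod p U → U.length < 2 * p

/-- A nonempty string `X` is primitive if `X = Y^t` implies `t = 1`. -/
def StrPrimitive (X : List α) : Prop :=
  X ≠ [] ∧ ∀ (Y : List α) (t : ℕ), X = (List.replicate t Y).flatten → t = 1

/-- A string is superprimitive if it has no proper cover. -/
def Superprimitive (T : List α) : Prop :=
  ¬ ∃ C : List α, IsCover C T ∧ C.length < T.length

/-- The length of the shortest cover of `T`. -/
noncomputable def covLen (T : List α) : ℕ :=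
  sInf {c | ∃ C : List α, C.length = c ∧ IsCover C T}

/-- `{a, a+p, ..., a+(t-1)p}` is a maximal arithmetic progression with
difference `p` inside the set `S`. -/
def MaxProg (S : Set ℕ) (p a t : ℕ) : Prop :=
  0 < t ∧ (∀ r, r < t → a + r * p ∈ S) ∧ (∀ b, b + p = a → b ∉ S) ∧ a + t * p ∉ S

end Defs

/-- Fibonacci strings over `Bool` (`true` = a, `false` = b):
`Fib_0 = b`, `Fib_1 = a`, `Fib_m = Fib_{m-1} Fib_{m-2}`. -/
def fibWord : ℕ → List Bool
  | 0 => [false]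
  | 1 => [true]
  | (m + 2) => fibWord (m + 1) ++ fibWord m

/-- Fibonacci numbers `F_k = |Fib_k|`: `F_0 = F_1 = 1`, `F_2 = 2`, `F_3 = 3`, ... -/
def F (k : ℕ) : ℕ := (fibWord k).length

/-- The `n`-th letter of the infinite Fibonacci word (each `Fib_m`, `m ≥ 1`,
is a prefix of the infinite word, and `F_{n+2} > n`). -/
def fibInf (n : ℕ) : Bool := (fibWord (n + 2)).getD n false

/-- The length-`ℓ` prefix `Fib[0..ℓ)` of the infinite Fibonacci word. -/
def fibPrefix (ℓ : ℕ) : List Bool := (List.range ℓ).map fibInf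

/-- `Cov_Fib[ℓ]`: the length of the shortest cover of `Fib[0..ℓ)`. -/
noncomputable def covFib (ℓ : ℕ) : ℕ := covLen (fibPrefix ℓ)


-- === aux lemmas ===

lemma my_F_rec (m : ℕ) : F (m + 2) = F (m + 1) + F m := by
  simp [F, fibWord, List.length_append]

lemma my_F_pos : ∀ m, 0 < F m
  | 0 => by simp [F, fibWord]
  | 1 => by simp [F, fibWord]
  | (m+2) => by rw [my_F_rec]; have := my_F_pos (m+1); omega

lemma my_F_le_succ (m : ℕ) : F m ≤ F (m + 1) := by
  cases m with
  | zero => simp [F, fibWord]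
  | succ m => rw [my_F_rec]; have := my_F_pos m; omega

lemma my_F_mono : Monotone F := monotone_nat_of_le_succ my_F_le_succ

lemma my_lt_F : ∀ n, n < F (n + 2)
  | 0 => my_F_pos 2
  | (n+1) => by
      have h1 := my_lt_F n
      have h2 := my_F_pos (n+1)
      have e : F (n + 1 + 2) = F (n + 2) + F (n + 1) := my_F_rec (n + 1)
      omega

lemma fibWord_prefix_succ : ∀ m, 1 ≤ m → fibWord m <+: fibWord (m + 1)
  | 1, _ => ⟨[false], rfl⟩
  | (m+2), _ => ⟨fibWord (m+1), rfl⟩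

lemma fibWord_prefix {m n : ℕ} (h1 : 1 ≤ m) (h : m ≤ n) : fibWord m <+: fibWord n := by
  induction n, h using Nat.le_induction with
  | base => exact List.prefix_refl _
  | succ n hn ih => exact ih.trans (fibWord_prefix_succ n (h1.trans hn))

lemma getElem?_of_prefix {l1 l2 : List Bool} (h : l1 <+: l2) {n : ℕ} (hn : n < l1.length) :
    l2[n]? = l1[n]? := by
  obtain ⟨t, rfl⟩ := h; simp [List.getElem?_append, hn]

/-- `fibInf n` can be read in any `fibWord m` with `n < F m`. -/
lemma fibInf_eq {m n : ℕ} (h1 : 1 ≤ m) (h2 : n < F m) :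
    (fibWord m)[n]? = some (fibInf n) := by
  have hn2 : n < F (n + 2) := my_lt_F n
  rcases le_total m (n + 2) with h | h
  · have hp := fibWord_prefix h1 h
    have : (fibWord (n+2))[n]? = (fibWord m)[n]? := getElem?_of_prefix hp h2
    rw [← this]
    rw [fibInf, List.getD_eq_getElem?_getD]
    rcases List.getElem?_eq_some_iff.2 ⟨hn2, rfl⟩ with _
    have : (fibWord (n+2))[n]? = some ((fibWord (n+2))[n]'hn2) := List.getElem?_eq_getElem hn2
    rw [this]; simp
  · have hp := fibWord_prefix (by omega : 1 ≤ n + 2) h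
    have heq : (fibWord m)[n]? = (fibWord (n+2))[n]? := getElem?_of_prefix hp hn2
    rw [heq, fibInf, List.getD_eq_getElem?_getD]
    have : (fibWord (n+2))[n]? = some ((fibWord (n+2))[n]'hn2) := List.getElem?_eq_getElem hn2
    rw [this]; simp

/-- Swap lemma: `Fib_{m+1}Fib_m` and `Fib_mFib_{m+1}` agree on the first `F_{m+2}-2` letters. -/
lemma swapLemma : ∀ m, (fibWord (m+1) ++ fibWord m).take (F (m+2) - 2)
    = (fibWord m ++ fibWord (m+1)).take (F (m+2) - 2)
  | 0 => rfl
  | (m+1) => by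
      have ih := swapLemma m
      have hF : F (m+3) - 2 = F (m+1) + (F (m+2) - 2) := by
        have h2 : F (m+2) = F (m+1) + F m := my_F_rec m
        have h3 : F (m+1+2) = F (m+1+1) + F (m+1) := my_F_rec (m+1)
        have e1 : F (m+3) = F (m+1+2) := congrArg F (by omega)
        have e2 : F (m+2) = F (m+1+1) := congrArg F (by omega)
        have := my_F_pos m
        have := my_F_pos (m+1)
        omega
      have e1 : fibWord (m+3) = fibWord (m+2) ++ fibWord (m+1) := rfl
      have e2 : fibWord (m+2) = fibWord (m+1) ++ fibWord m := rfl
      calc (fibWord (m+2) ++ fibWord (m+1)).take (F (m+3) - 2)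
          = (fibWord (m+1) ++ (fibWord m ++ fibWord (m+1))).take (F (m+1) + (F (m+2) - 2)) := by
            rw [hF, e2, List.append_assoc]
        _ = fibWord (m+1) ++ (fibWord m ++ fibWord (m+1)).take (F (m+2) - 2) := by
            rw [show F (m+1) = (fibWord (m+1)).length from rfl, List.take_length_add_append]
        _ = fibWord (m+1) ++ (fibWord (m+1) ++ fibWord m).take (F (m+2) - 2) := by rw [ih]
        _ = (fibWord (m+1) ++ (fibWord (m+1) ++ fibWord m)).take (F (m+1) + (F (m+2) - 2)) := by
            rw [show F (m+1) = (fibWord (m+1)).length from rfl, List.take_length_add_append]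
        _ = (fibWord (m+1) ++ fibWord (m+2)).take (F (m+3) - 2) := by rw [hF, e2]

/-- Period lemma: `Fib[x] = Fib[x + F_j]` as long as `x + F_j ≤ F_{j+2} - 3`. -/
lemma fib_period (j x : ℕ) (h : x + F j + 3 ≤ F (j + 2)) : fibInf (x + F j) = fibInf x := by
  have hrec := my_F_rec j
  have hx1 : x < F (j + 1) := by omega
  have hx2 : x + F j < F (j + 2) := by omega
  have e1 : (fibWord (j+1))[x]? = some (fibInf x) := fibInf_eq (by omega) hx1
  have e2 : (fibWord (j+2))[x + F j]? = some (fibInf (x + F j)) := fibInf_eq (by omega) hx2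
  have key : (fibWord (j+2))[x + F j]? = (fibWord (j+1))[x]? := by
    have hlt : x + F j < F (j + 2) - 2 := by omega
    have e3 : fibWord (j+2) = fibWord (j+1) ++ fibWord j := rfl
    calc (fibWord (j+2))[x + F j]?
        = ((fibWord (j+1) ++ fibWord j).take (F (j+2) - 2))[x + F j]? := by
          rw [← e3]; simp [List.getElem?_take, hlt]
      _ = ((fibWord j ++ fibWord (j+1)).take (F (j+2) - 2))[x + F j]? := by rw [swapLemma j]
      _ = (fibWord j ++ fibWord (j+1))[x + F j]? := by simp [List.getElem?_take, hlt]
      _ = (fibWord (j+1))[x]? := by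
          have hlj : (fibWord j).length = F j := rfl
          rw [List.getElem?_append_right (by rw [hlj]; omega)]
          congr 1
          rw [hlj]; omega
  rw [e2, e1] at key; exact Option.some.inj key

lemma fibPrefix_length (ℓ : ℕ) : (fibPrefix ℓ).length = ℓ := by simp [fibPrefix]

lemma fibPrefix_getElem? {ℓ n : ℕ} (h : n < ℓ) : (fibPrefix ℓ)[n]? = some (fibInf n) := by
  simp [fibPrefix, List.getElem?_map, List.getElem?_range, h]

/-- Characterization of occurrences in Fibonacci prefixes. -/
lemma occursAt_iff {C : List Bool} {ℓ i : ℕ} :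
    OccursAt C (fibPrefix ℓ) i ↔
      i + C.length ≤ ℓ ∧ ∀ r, r < C.length → C[r]? = some (fibInf (i + r)) := by
  constructor
  · rintro ⟨hlen, heq⟩
    rw [fibPrefix_length] at hlen
    refine ⟨hlen, fun r hr => ?_⟩
    rw [← heq]
    have h1 : i + r < ℓ := by omega
    simp [List.getElem?_take, hr, List.getElem?_drop, fibPrefix_getElem? h1]
  · rintro ⟨hlen, heq⟩
    refine ⟨by rw [fibPrefix_length]; exact hlen, ?_⟩
    apply List.ext_getElem?
    intro n
    rcases lt_or_ge n C.length with hn | hn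
    · have h1 : i + n < ℓ := by omega
      rw [heq n hn]
      simp [List.getElem?_take, hn, List.getElem?_drop, fibPrefix_getElem? h1]
    · have h2 : C[n]? = none := List.getElem?_eq_none hn
      rw [h2]
      rcases lt_or_ge n ((fibPrefix ℓ).drop i).length with h3 | h3
      · simp only [List.getElem?_take]
        simp [show ¬ n < C.length by omega]
      · exact List.getElem?_eq_none (by simp [List.length_take]; omega)

lemma occursAt_zero_self (T : List Bool) : OccursAt T T 0 := by
  constructor
  · simp
  · simp

lemma cover_self (T : List Bool) : IsCover T T := by
  refine ⟨⟨0, occursAt_zero_self T⟩, fun q hq => ⟨0, occursAt_zero_self T, by omega, by omega⟩⟩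

lemma covFib_le_self (ℓ : ℕ) : covFib ℓ ≤ ℓ := by
  have : ℓ ∈ {c | ∃ C : List Bool, C.length = c ∧ IsCover C (fibPrefix ℓ)} :=
    ⟨fibPrefix ℓ, fibPrefix_length ℓ, cover_self _⟩
  exact Nat.sInf_le this

lemma covSet_nonempty (ℓ : ℕ) :
    {c | ∃ C : List Bool, C.length = c ∧ IsCover C (fibPrefix ℓ)}.Nonempty :=
  ⟨ℓ, fibPrefix ℓ, fibPrefix_length ℓ, cover_self _⟩

/-- Forward direction: a short cover of `Fib[0..ℓ)` covers `Fib[0..ℓ')`. -/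
lemma cover_down {k ℓ : ℕ} (hk : 4 ≤ k) (h1 : F k < ℓ) (h2 : ℓ + 2 ≤ F (k + 1))
    {C : List Bool} (hC : IsCover C (fibPrefix ℓ)) (hlen : C.length ≤ ℓ - F (k - 1)) :
    IsCover C (fibPrefix (ℓ - F (k - 1))) := by
  obtain ⟨j, rfl⟩ : ∃ j, k = j + 4 := ⟨k - 4, by omega⟩
  set p := F (j + 3) with hp
  have b1 : F (j + 4 + 1) = F (j + 5) := congrArg F (by omega)
  have b2 : F (j + 3 + 2) = F (j + 5) := congrArg F (by omega)
  have b3 : F (j + 2 + 2) = F (j + 4) := congrArg F (by omega)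
  have b4 : F (j + 2 + 1) = F (j + 3) := congrArg F (by omega)
  have b5 : F (j + 1 + 1) = F (j + 2) := congrArg F (by omega)
  have hmono1 : F (j + 1) ≤ F (j + 2) := my_F_le_succ (j + 1)
  have hmono2 : F (j + 2) ≤ F (j + 3) := my_F_le_succ (j + 2)
  have hFk : F (j + 4) = F (j + 3) + F (j + 2) := my_F_rec (j + 2)
  have hFk1 : F (j + 5) = F (j + 4) + F (j + 3) := my_F_rec (j + 3)
  have hppos := my_F_pos (j + 3)
  have hp2pos := my_F_pos (j + 2)
  have hk' : j + 4 - 1 = j + 3 := by omega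
  rw [hk'] at hlen ⊢
  set ℓ' := ℓ - F (j + 3) with hℓ'
  have hℓ'1 : F (j + 2) < ℓ' := by omega
  -- occurrence of C at 0
  obtain ⟨i0, hocc0, hi0le, _⟩ := hC.2 0 (by rw [fibPrefix_length]; omega)
  have hi0 : i0 = 0 := by omega
  subst hi0
  obtain ⟨-, hocc0'⟩ := occursAt_iff.1 hocc0
  have occ0 : OccursAt C (fibPrefix ℓ') 0 :=
    occursAt_iff.2 ⟨by omega, fun r hr => by simpa using hocc0' r hr⟩
  refine ⟨⟨0, occ0⟩, fun q hq => ?_⟩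
  rw [fibPrefix_length] at hq
  obtain ⟨i, hocc, hile, hqlt⟩ := hC.2 (q + F (j + 3)) (by rw [fibPrefix_length]; omega)
  obtain ⟨hiC, hiC2⟩ := occursAt_iff.1 hocc
  rcases lt_or_ge i (F (j + 3)) with hcase | hcase
  · -- occurrence straddles: then q < |C|, use occurrence at 0
    have hqC : q < C.length := by omega
    exact ⟨0, occ0, by omega, by omega⟩
  · -- shift occurrence down by F (j+3)
    refine ⟨i - F (j + 3), occursAt_iff.2 ⟨by omega, fun r hr => ?_⟩, by omega, by omega⟩
    have hper : fibInf (i - F (j + 3) + r + F (j + 3)) = fibInf (i - F (j + 3) + r) := by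
      apply fib_period (j + 3)
      have : i + r < ℓ := by omega
      omega
    rw [hiC2 r hr, ← hper, show i - F (j + 3) + r + F (j + 3) = i + r by omega]

/-- Backward direction: a cover of `Fib[0..ℓ')` covers `Fib[0..ℓ)`. -/
lemma cover_up {k ℓ : ℕ} (hk : 4 ≤ k) (h1 : F k < ℓ) (h2 : ℓ + 2 ≤ F (k + 1))
    (h4 : ℓ ≠ 2 * F (k - 1) - 1)
    {C : List Bool} (hC : IsCover C (fibPrefix (ℓ - F (k - 1)))) :
    IsCover C (fibPrefix ℓ) := by
  obtain ⟨j, rfl⟩ : ∃ j, k = j + 4 := ⟨k - 4, by omega⟩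
  have b1 : F (j + 4 + 1) = F (j + 5) := congrArg F (by omega)
  have b2 : F (j + 3 + 2) = F (j + 5) := congrArg F (by omega)
  have b3 : F (j + 2 + 2) = F (j + 4) := congrArg F (by omega)
  have b4 : F (j + 2 + 1) = F (j + 3) := congrArg F (by omega)
  have b5 : F (j + 1 + 1) = F (j + 2) := congrArg F (by omega)
  have hmono1 : F (j + 1) ≤ F (j + 2) := my_F_le_succ (j + 1)
  have hmono2 : F (j + 2) ≤ F (j + 3) := my_F_le_succ (j + 2)
  have hFk : F (j + 4) = F (j + 3) + F (j + 2) := my_F_rec (j + 2)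
  have hFk1 : F (j + 5) = F (j + 4) + F (j + 3) := my_F_rec (j + 3)
  have hFk2 : F (j + 3) = F (j + 2) + F (j + 1) := my_F_rec (j + 1)
  have hppos := my_F_pos (j + 3)
  have hp2pos := my_F_pos (j + 2)
  have hp1pos := my_F_pos (j + 1)
  have hk' : j + 4 - 1 = j + 3 := by omega
  rw [hk'] at hC h4
  set ℓ' := ℓ - F (j + 3) with hℓ'
  have hℓ'1 : F (j + 2) < ℓ' := by omega
  -- C occurs at 0 in fibPrefix ℓ', and |C| ≤ ℓ'
  obtain ⟨i0, hocc0, hi0le, hi0gt⟩ := hC.2 0 (by rw [fibPrefix_length]; omega)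
  have hi0 : i0 = 0 := by omega
  subst hi0
  obtain ⟨hClen, hocc0'⟩ := occursAt_iff.1 hocc0
  have hClen' : C.length ≤ ℓ' := by omega
  have occ0 : OccursAt C (fibPrefix ℓ) 0 :=
    occursAt_iff.2 ⟨by omega, fun r hr => by simpa using hocc0' r hr⟩
  refine ⟨⟨0, occ0⟩, fun q hq => ?_⟩
  rw [fibPrefix_length] at hq
  rcases lt_or_ge q ℓ' with hcase | hcase
  · -- prefix copy
    obtain ⟨i, hocc, hile, hqlt⟩ := hC.2 q (by rw [fibPrefix_length]; omega)
    obtain ⟨hiC, hiC2⟩ := occursAt_iff.1 hocc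
    exact ⟨i, occursAt_iff.2 ⟨by omega, fun r hr => hiC2 r hr⟩, hile, hqlt⟩
  rcases le_or_gt (F (j + 3)) q with hcase2 | hcase2
  · -- suffix copy: shift up by F (j+3)
    obtain ⟨i, hocc, hile, hqlt⟩ := hC.2 (q - F (j + 3)) (by rw [fibPrefix_length]; omega)
    obtain ⟨hiC, hiC2⟩ := occursAt_iff.1 hocc
    refine ⟨i + F (j + 3), occursAt_iff.2 ⟨by omega, fun r hr => ?_⟩, by omega, by omega⟩
    have hper : fibInf (i + r + F (j + 3)) = fibInf (i + r) := by
      apply fib_period (j + 3)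
      have : i + r < ℓ' := by omega
      omega
    rw [hiC2 r hr, ← hper, show i + r + F (j + 3) = i + F (j + 3) + r by omega]
  · -- gap: ℓ' ≤ q < F (j+3); here ℓ' ≤ F (j+3) - 2 since ℓ ≠ 2F(j+3) - 1
    have hgap : ℓ' + 2 ≤ F (j + 3) := by omega
    -- cover q using shift by F (j+2) of occurrence covering q - F (j+2)
    have hq2 : q - F (j + 2) < ℓ' := by omega
    obtain ⟨i, hocc, hile, hqlt⟩ := hC.2 (q - F (j + 2)) (by rw [fibPrefix_length]; omega)
    obtain ⟨hiC, hiC2⟩ := occursAt_iff.1 hocc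
    refine ⟨i + F (j + 2), occursAt_iff.2 ⟨by omega, fun r hr => ?_⟩, by omega, by omega⟩
    have hper : fibInf (i + r + F (j + 2)) = fibInf (i + r) := by
      apply fib_period (j + 2)
      have h5 : i + r < ℓ' := by omega
      omega
    rw [hiC2 r hr, ← hper, show i + r + F (j + 2) = i + F (j + 2) + r by omega]

theorem stmt9' (k : ℕ) (hk : 4 ≤ k) (ℓ : ℕ)
    (h1 : F k < ℓ) (h2 : ℓ < F (k + 1))
    (h3 : ℓ ≠ F (k + 1) - 1) (h4 : ℓ ≠ 2 * F (k - 1) - 1) :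
    covFib ℓ = covFib (ℓ - F (k - 1)) := by
  have hFpos := my_F_pos (k + 1)
  have h2' : ℓ + 2 ≤ F (k + 1) := by omega
  have hFk : F k = F (k - 1) + F (k - 2) := by
    have := my_F_rec (k - 2)
    have e1 : k - 2 + 2 = k := by omega
    have e2 : k - 2 + 1 = k - 1 := by omega
    rw [e1, e2] at this; exact this
  have hℓ' : F (k - 2) < ℓ - F (k - 1) := by
    have := my_F_pos (k - 1); omega
  apply le_antisymm
  · -- get the minimal cover of the shorter prefix and lift it
    obtain ⟨C', hC'len, hC'⟩ := Nat.sInf_mem (covSet_nonempty (ℓ - F (k - 1)))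
    have : IsCover C' (fibPrefix ℓ) := cover_up hk h1 h2' h4 hC'
    exact Nat.sInf_le ⟨C', hC'len, this⟩
  · -- get the minimal cover of the longer prefix and push it down
    obtain ⟨C, hClen, hCc⟩ := Nat.sInf_mem (covSet_nonempty ℓ)
    have hsmall : C.length ≤ ℓ - F (k - 1) := by
      rw [hClen]
      calc covFib ℓ ≤ covFib (ℓ - F (k - 1)) := by
            obtain ⟨C', hC'len, hC'⟩ := Nat.sInf_mem (covSet_nonempty (ℓ - F (k - 1)))
            exact Nat.sInf_le ⟨C', hC'len, cover_up hk h1 h2' h4 hC'⟩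
        _ ≤ ℓ - F (k - 1) := covFib_le_self _
    have : IsCover C (fibPrefix (ℓ - F (k - 1))) := cover_down hk h1 h2' hCc hsmall
    exact Nat.sInf_le ⟨C, hClen, this⟩

/-- For every `k ≥ 4` and every `ℓ` with `F_k < ℓ < F_{k+1}`, `ℓ ≠ F_{k+1} - 1`
and `ℓ ≠ 2F_{k-1} - 1`, we have `Cov_Fib[ℓ] = Cov_Fib[ℓ - F_{k-1}]`. -/
theorem stmt9 (k : ℕ) (hk : 4 ≤ k) (ℓ : ℕ)
    (h1 : F k < ℓ) (h2 : ℓ < F (k + 1))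
    (h3 : ℓ ≠ F (k + 1) - 1) (h4 : ℓ ≠ 2 * F (k - 1) - 1) :
    covFib ℓ = covFib (ℓ - F (k - 1)) := by
  exact stmt9' k hk ℓ h1 h2 h3 h4
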